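/- arXiv:2504.20600 — 3 statements merged into one kernel-verified Lean document; each statement's English description precedes it below -/
import Mathlib

section
/- Let x₁ ≥ x₂ ≥ ... ≥ x_m be a citation vector, h its h-index and ν̄ its tempered ν̄-index, with m*(j) = #{i : x_i ≥ j} and S_k = x₁ + ... + x_k (S_0 = 0). Then h = ν̄ if and only if either h = m, or h < m and S_{m*(h+1)} < (h+1)². -/
open Finset

/-- Partial sum `S_k = x₁ + ⋯ + x_k` of a citation vector, with the natural
extension `S_k = S_m` for `k > m`. -/
def pSum {m : ℕ} (x : Fin m → ℕ) (k : ℕ) : ℕ :=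
  ∑ i : Fin m, if (i : ℕ) < k then x i else 0

/-- `m*(j)`: the number of papers with at least `j` citations. -/
def mStar {m : ℕ} (x : Fin m → ℕ) (j : ℕ) : ℕ :=
  (Finset.univ.filter fun i => j ≤ x i).card

/-- The Hirsch `h`-index: `h = max {j ≥ 1 : m*(j) ≥ j}` (max ∅ = 0). -/
noncomputable def hIndex {m : ℕ} (x : Fin m → ℕ) : ℕ :=
  sSup {j : ℕ | 1 ≤ j ∧ j ≤ mStar x j}

/-- The Egghe `g`-index: `g = max {1 ≤ k ≤ m : S_k ≥ k²}` (max ∅ = 0). -/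
noncomputable def gIndex {m : ℕ} (x : Fin m → ℕ) : ℕ :=
  sSup {k : ℕ | 1 ≤ k ∧ k ≤ m ∧ k ^ 2 ≤ pSum x k}

/-- The unconstrained `g*`-index: `g* = max {k ≥ 1 : S_k ≥ k²}` (max ∅ = 0). -/
noncomputable def gStar {m : ℕ} (x : Fin m → ℕ) : ℕ :=
  sSup {k : ℕ | 1 ≤ k ∧ k ^ 2 ≤ pSum x k}

/-- The `ν`-index: `ν = max {j ≥ 1 : Σ_{i : x_i ≥ j} x_i ≥ j²}` (max ∅ = 0). -/
noncomputable def nuIndex {m : ℕ} (x : Fin m → ℕ) : ℕ :=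
  sSup {j : ℕ | 1 ≤ j ∧ j ^ 2 ≤ ∑ i ∈ Finset.univ.filter (fun i => j ≤ x i), x i}

/-- The tempered `ν̄`-index: `ν̄ = max {1 ≤ j ≤ m : Σ_{i : x_i ≥ j} x_i ≥ j²}` (max ∅ = 0). -/
noncomputable def nuBar {m : ℕ} (x : Fin m → ℕ) : ℕ :=
  sSup {j : ℕ | 1 ≤ j ∧ j ≤ m ∧ j ^ 2 ≤ ∑ i ∈ Finset.univ.filter (fun i => j ≤ x i), x i}

/-- The parametric index `ν_α = max {j ≥ 1 : Σ_{i : x_i ≥ j} x_i^α ≥ j^(α+1)}` (max ∅ = 0),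
with real powers. -/
noncomputable def nuAlpha {m : ℕ} (x : Fin m → ℕ) (α : ℝ) : ℕ :=
  sSup {j : ℕ | 1 ≤ j ∧
    (j : ℝ) ^ (α + 1) ≤ ∑ i ∈ Finset.univ.filter (fun i => j ≤ x i), (x i : ℝ) ^ α}

/-- Extension of a finite citation vector by fictitious zeros. -/
def extByZero {m : ℕ} (x : Fin m → ℕ) (i : ℕ) : ℕ :=
  if h : i < m then x ⟨i, h⟩ else 0

section Aux

variable {m : ℕ} (x : Fin m → ℕ)

lemma card_filter_lt_val' {k : ℕ} (hk : k ≤ m) :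
    (univ.filter fun i : Fin m => (i : ℕ) < k).card = k := by
  have himg : (univ.filter fun i : Fin m => (i : ℕ) < k).image Fin.val
      = Finset.range k := by
    ext a
    simp only [mem_image, mem_filter, mem_univ, true_and, mem_range]
    constructor
    · rintro ⟨i, hi, rfl⟩; exact hi
    · intro ha; exact ⟨⟨a, lt_of_lt_of_le ha hk⟩, ha, rfl⟩
  calc (univ.filter fun i : Fin m => (i : ℕ) < k).card
      = ((univ.filter fun i : Fin m => (i : ℕ) < k).image Fin.val).card :=
        (card_image_of_injective _ Fin.val_injective).symm
    _ = k := by rw [himg, card_range]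

lemma mStar_le' (j : ℕ) : mStar x j ≤ m := by
  unfold mStar
  calc (univ.filter fun i : Fin m => j ≤ x i).card ≤ univ.card := card_filter_le _ _
    _ = m := by simp

lemma filter_ge_eq' (hx : Antitone x) (j : ℕ) :
    (univ.filter fun i : Fin m => j ≤ x i)
      = univ.filter fun i : Fin m => (i : ℕ) < mStar x j := by
  ext i
  simp only [mem_filter, mem_univ, true_and]
  constructor
  · intro hi
    have hsub : (univ.filter fun i' : Fin m => (i' : ℕ) < (i : ℕ) + 1) ⊆
        (univ.filter fun i' : Fin m => j ≤ x i') := by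
      intro i' hi'
      simp only [mem_filter, mem_univ, true_and] at hi' ⊢
      exact le_trans hi (hx (Fin.le_def.mpr (by omega)))
    have h1 := card_le_card hsub
    rw [card_filter_lt_val' (by omega : (i : ℕ) + 1 ≤ m)] at h1
    unfold mStar
    omega
  · intro hi
    by_contra hxi
    push_neg at hxi
    have hsub : (univ.filter fun i' : Fin m => j ≤ x i') ⊆
        (univ.filter fun i' : Fin m => (i' : ℕ) < (i : ℕ)) := by
      intro i' hi'
      simp only [mem_filter, mem_univ, true_and] at hi' ⊢
      by_contra h'
      push_neg at h'
      have := hx (Fin.le_def.mpr h' : i ≤ i')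
      omega
    have h2 := card_le_card hsub
    rw [card_filter_lt_val' (le_of_lt i.isLt)] at h2
    unfold mStar at hi
    omega

lemma sum_filter_eq' (hx : Antitone x) (j : ℕ) :
    ∑ i ∈ univ.filter (fun i => j ≤ x i), x i = pSum x (mStar x j) := by
  rw [filter_ge_eq' x hx j, Finset.sum_filter]
  rfl

lemma T_anti' : Antitone (fun j => ∑ i ∈ univ.filter (fun i : Fin m => j ≤ x i), x i) := by
  intro j j' hjj'
  apply Finset.sum_le_sum_of_subset
  intro i hi
  simp only [mem_filter, mem_univ, true_and] at hi ⊢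
  exact le_trans hjj' hi

lemma hIndex_le_m' : hIndex x ≤ m := by
  apply csSup_le'
  rintro j ⟨_, hj2⟩
  exact le_trans hj2 (mStar_le' x j)

lemma nuBar_le_m' : nuBar x ≤ m := by
  apply csSup_le'
  rintro j ⟨_, hj2, _⟩
  exact hj2

lemma hIndex_mem' (h1 : 1 ≤ hIndex x) :
    hIndex x ∈ {j : ℕ | 1 ≤ j ∧ j ≤ mStar x j} := by
  have hbdd : BddAbove {j : ℕ | 1 ≤ j ∧ j ≤ mStar x j} :=
    ⟨m, fun j hj => le_trans hj.2 (mStar_le' x j)⟩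
  have hne : {j : ℕ | 1 ≤ j ∧ j ≤ mStar x j}.Nonempty := by
    by_contra hne
    rw [Set.not_nonempty_iff_eq_empty] at hne
    unfold hIndex at h1
    rw [hne, csSup_empty] at h1
    simp at h1
  exact Nat.sSup_mem hne hbdd

lemma nuBar_mem' (h1 : 1 ≤ nuBar x) :
    nuBar x ∈ {j : ℕ | 1 ≤ j ∧ j ≤ m ∧
      j ^ 2 ≤ ∑ i ∈ Finset.univ.filter (fun i => j ≤ x i), x i} := by
  have hbdd : BddAbove {j : ℕ | 1 ≤ j ∧ j ≤ m ∧
      j ^ 2 ≤ ∑ i ∈ Finset.univ.filter (fun i => j ≤ x i), x i} :=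
    ⟨m, fun j hj => hj.2.1⟩
  have hne : Set.Nonempty {j : ℕ | 1 ≤ j ∧ j ≤ m ∧
      j ^ 2 ≤ ∑ i ∈ Finset.univ.filter (fun i => j ≤ x i), x i} := by
    by_contra hne
    rw [Set.not_nonempty_iff_eq_empty] at hne
    unfold nuBar at h1
    rw [hne, csSup_empty] at h1
    simp at h1
  exact Nat.sSup_mem hne hbdd

lemma nuBar_bdd' : BddAbove {j : ℕ | 1 ≤ j ∧ j ≤ m ∧
    j ^ 2 ≤ ∑ i ∈ Finset.univ.filter (fun i => j ≤ x i), x i} :=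
  ⟨m, fun j hj => hj.2.1⟩

lemma hIndex_le_nuBar' : hIndex x ≤ nuBar x := by
  rcases Nat.eq_zero_or_pos (hIndex x) with h0 | h1
  · omega
  · obtain ⟨h1', h2⟩ := hIndex_mem' x h1
    have hsum : hIndex x ^ 2 ≤
        ∑ i ∈ Finset.univ.filter (fun i => hIndex x ≤ x i), x i := by
      have hcard : (Finset.univ.filter fun i : Fin m => hIndex x ≤ x i).card
          = mStar x (hIndex x) := rfl
      have := Finset.card_nsmul_le_sum
        (Finset.univ.filter fun i : Fin m => hIndex x ≤ x i) x (hIndex x)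
        (fun i hi => (Finset.mem_filter.mp hi).2)
      rw [hcard, smul_eq_mul] at this
      calc hIndex x ^ 2 = hIndex x * hIndex x := sq (hIndex x) ▸ rfl
        _ ≤ mStar x (hIndex x) * hIndex x := Nat.mul_le_mul_right _ h2
        _ ≤ _ := this
    exact le_csSup (nuBar_bdd' x)
      ⟨h1', le_trans h2 (mStar_le' x _), hsum⟩

end Aux

theorem stmt11 {m : ℕ} (hm : 1 ≤ m) (x : Fin m → ℕ) (hx : Antitone x) :
    hIndex x = nuBar x ↔
      (hIndex x = m ∨ (hIndex x < m ∧
        pSum x (mStar x (hIndex x + 1)) < (hIndex x + 1) ^ 2)) := by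
  have hlem := hIndex_le_m' x
  have hleν := hIndex_le_nuBar' x
  have hνlem := nuBar_le_m' x
  constructor
  · intro heq
    rcases eq_or_lt_of_le hlem with hEm | hlt
    · exact Or.inl hEm
    · refine Or.inr ⟨hlt, ?_⟩
      by_contra hge
      push_neg at hge
      rw [← sum_filter_eq' x hx] at hge
      have hmem : hIndex x + 1 ∈ {j : ℕ | 1 ≤ j ∧ j ≤ m ∧
          j ^ 2 ≤ ∑ i ∈ Finset.univ.filter (fun i => j ≤ x i), x i} :=
        ⟨by omega, by omega, hge⟩
      have : hIndex x + 1 ≤ nuBar x := le_csSup (nuBar_bdd' x) hmem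
      omega
  · rintro (hEm | ⟨hlt, hS⟩)
    · omega
    · by_contra hne
      have hgt : hIndex x < nuBar x := by omega
      have hν1 : 1 ≤ nuBar x := by omega
      obtain ⟨_, _, hνsum⟩ := nuBar_mem' x hν1
      have hmono := T_anti' x (show hIndex x + 1 ≤ nuBar x by omega)
      have : (hIndex x + 1) ^ 2 ≤
          ∑ i ∈ Finset.univ.filter (fun i => hIndex x + 1 ≤ x i), x i := by
        calc (hIndex x + 1) ^ 2 ≤ nuBar x ^ 2 := Nat.pow_le_pow_left (by omega) 2
          _ ≤ _ := le_trans hνsum hmono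
      rw [← sum_filter_eq' x hx] at hS
      omega
end

section
/- Let x₁ ≥ x₂ ≥ ... ≥ x_m be a citation vector, ν̄ its tempered ν̄-index and g its g-index, with S_k = x₁ + ... + x_k for 1 ≤ k ≤ m. Then ν̄ = g if and only if either ν̄ = m, or ν̄ < m and S_{ν̄+1} < (ν̄+1)². -/
open Finset

lemma card_filter_lt' {m j : ℕ} (hj : j ≤ m) :
    (Finset.univ.filter fun i : Fin m => (i:ℕ) < j).card = j := by
  have h : (Finset.univ.filter fun i : Fin m => (i:ℕ) < j)
      = Finset.map (Fin.castLEEmb hj) Finset.univ := by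
    ext i
    simp only [Finset.mem_filter, Finset.mem_univ, true_and, Finset.mem_map]
    constructor
    · intro h; exact ⟨⟨i, h⟩, by simp [Fin.castLEEmb, Fin.castLE, Fin.ext_iff]⟩
    · rintro ⟨a, _, rfl⟩; simp [Fin.castLEEmb, Fin.castLE]
  rw [h, Finset.card_map, Finset.card_univ, Fintype.card_fin]

lemma pSum_eq_filter {m : ℕ} (x : Fin m → ℕ) (k : ℕ) :
    pSum x k = ∑ i ∈ Finset.univ.filter (fun i : Fin m => (i:ℕ) < k), x i := by
  rw [Finset.sum_filter]; rfl

lemma pSum_succ {m : ℕ} (x : Fin m → ℕ) (k : ℕ) :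
    pSum x (k+1) = pSum x k + ∑ i : Fin m, if (i:ℕ) = k then x i else 0 := by
  unfold pSum
  rw [← Finset.sum_add_distrib]
  apply Finset.sum_congr rfl
  intro i _
  by_cases h1 : (i:ℕ) < k
  · simp [h1, Nat.lt_succ_of_lt h1, Nat.ne_of_lt h1]
  by_cases h2 : (i:ℕ) = k
  · simp [h1, h2]
  · have h3 : ¬ (i:ℕ) < k+1 := by omega
    simp [h1, h2, h3]

lemma single_sum {m : ℕ} (x : Fin m → ℕ) {k : ℕ} (h : k < m) :
    (∑ i : Fin m, if (i:ℕ) = k then x i else 0) = x ⟨k, h⟩ := by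
  rw [Finset.sum_eq_single (⟨k, h⟩ : Fin m)]
  · simp
  · intro b _ hb
    have : (b:ℕ) ≠ k := by simpa [Fin.ext_iff] using hb
    simp [this]
  · simp

lemma single_sum_zero {m : ℕ} (x : Fin m → ℕ) {k : ℕ} (h : m ≤ k) :
    (∑ i : Fin m, if (i:ℕ) = k then x i else 0) = 0 := by
  apply Finset.sum_eq_zero
  intro i _
  have : (i:ℕ) ≠ k := by omega
  simp [this]

/-- step of downward closure of the g-condition -/
lemma g_step {m : ℕ} (x : Fin m → ℕ) (hx : Antitone x) (k : ℕ)
    (h : (k+1)^2 ≤ pSum x (k+1)) : k^2 ≤ pSum x k := by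
  by_cases hkm : k < m
  · rw [pSum_succ, single_sum x hkm] at h
    set a := x ⟨k, hkm⟩ with ha
    by_cases hsmall : a ≤ 2*k+1
    · have e : (k+1)^2 = k^2 + 2*k + 1 := by ring
      omega
    · -- a ≥ 2k + 2, so first k entries are each ≥ 2k+2 ≥ k
      have hk_le : k ≤ m := le_of_lt hkm
      have hlb : ∀ i ∈ Finset.univ.filter (fun i : Fin m => (i:ℕ) < k), k ≤ x i := by
        intro i hi
        simp only [Finset.mem_filter] at hi
        have hle : x ⟨k, hkm⟩ ≤ x i := hx (by simp only [Fin.le_def, Fin.val_mk]; omega)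
        omega
      calc k^2 = k * k := by ring
        _ = (Finset.univ.filter fun i : Fin m => (i:ℕ) < k).card * k := by
              rw [card_filter_lt' hk_le]
        _ ≤ ∑ i ∈ Finset.univ.filter (fun i : Fin m => (i:ℕ) < k), x i := by
              simpa using Finset.card_nsmul_le_sum (Finset.univ.filter fun i : Fin m => (i:ℕ) < k) x k hlb
        _ = pSum x k := (pSum_eq_filter x k).symm
  · rw [pSum_succ, single_sum_zero x (by omega)] at h
    simp at h
    calc k^2 ≤ (k+1)^2 := by nlinarith
      _ ≤ pSum x k := h

lemma g_down {m : ℕ} (x : Fin m → ℕ) (hx : Antitone x) :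
    ∀ k, k^2 ≤ pSum x k → ∀ j, j ≤ k → j^2 ≤ pSum x j := by
  intro k
  induction k with
  | zero => intro h j hj; interval_cases j; simpa using h
  | succ k ih =>
    intro h j hj
    rcases Nat.lt_or_ge j (k+1) with h1 | h1
    · exact ih (g_step x hx k h) j (by omega)
    · have : j = k+1 := by omega
      rw [this]; exact h

/-- initial-segment property of the citation filter -/
lemma filter_ge_lt {m : ℕ} (x : Fin m → ℕ) (hx : Antitone x) (j : ℕ) {i : Fin m}
    (hi : i ∈ Finset.univ.filter fun i => j ≤ x i) :
    (i:ℕ) < (Finset.univ.filter fun i : Fin m => j ≤ x i).card := by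
  simp only [Finset.mem_filter, Finset.mem_univ, true_and] at hi
  have hsub : Finset.Iic i ⊆ Finset.univ.filter fun i' : Fin m => j ≤ x i' := by
    intro i' hi'
    simp only [Finset.mem_Iic] at hi'
    simp only [Finset.mem_filter, Finset.mem_univ, true_and]
    exact le_trans hi (hx hi')
  have hcard := Finset.card_le_card hsub
  rw [Fin.card_Iic] at hcard
  omega

lemma mStar_ge_imp {m : ℕ} (x : Fin m → ℕ) (hx : Antitone x) {j : ℕ}
    (hjm : j ≤ m) (hms : j ≤ (Finset.univ.filter fun i : Fin m => j ≤ x i).card)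
    {i : Fin m} (hi : (i:ℕ) < j) : j ≤ x i := by
  by_contra hlt
  push_neg at hlt
  have hsub : (Finset.univ.filter fun i' : Fin m => j ≤ x i') ⊆
      Finset.univ.filter fun i' : Fin m => (i':ℕ) < (i:ℕ) := by
    intro i' hi'
    simp only [Finset.mem_filter, Finset.mem_univ, true_and] at hi' ⊢
    by_contra hge
    push_neg at hge
    have : x i' ≤ x i := hx (by rw [Fin.le_def]; omega)
    omega
  have hcard := Finset.card_le_card hsub
  rw [card_filter_lt' (le_of_lt i.isLt)] at hcard
  omega


theorem stmt12_aux {m : ℕ} (hm : 1 ≤ m) (x : Fin m → ℕ) (hx : Antitone x) :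
    (sSup {j : ℕ | 1 ≤ j ∧ j ≤ m ∧ j ^ 2 ≤ ∑ i ∈ Finset.univ.filter (fun i => j ≤ x i), x i}
      = sSup {k : ℕ | 1 ≤ k ∧ k ≤ m ∧ k ^ 2 ≤ pSum x k}) ↔
      (sSup {j : ℕ | 1 ≤ j ∧ j ≤ m ∧ j ^ 2 ≤ ∑ i ∈ Finset.univ.filter (fun i => j ≤ x i), x i} = m ∨
        (sSup {j : ℕ | 1 ≤ j ∧ j ≤ m ∧ j ^ 2 ≤ ∑ i ∈ Finset.univ.filter (fun i => j ≤ x i), x i} < m ∧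
        pSum x (sSup {j : ℕ | 1 ≤ j ∧ j ≤ m ∧ j ^ 2 ≤ ∑ i ∈ Finset.univ.filter (fun i => j ≤ x i), x i} + 1)
          < (sSup {j : ℕ | 1 ≤ j ∧ j ≤ m ∧ j ^ 2 ≤ ∑ i ∈ Finset.univ.filter (fun i => j ≤ x i), x i} + 1) ^ 2)) := by
  classical
  set N : Set ℕ := {j : ℕ | 1 ≤ j ∧ j ≤ m ∧ j ^ 2 ≤ ∑ i ∈ Finset.univ.filter (fun i => j ≤ x i), x i} with hN
  set G : Set ℕ := {k : ℕ | 1 ≤ k ∧ k ≤ m ∧ k ^ 2 ≤ pSum x k} with hG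
  have gBdd : BddAbove G := ⟨m, fun k hk => hk.2.1⟩
  have hsub : N ⊆ G := by
    rintro j ⟨hj1, hjm, hjT⟩
    refine ⟨hj1, hjm, ?_⟩
    by_cases hms : j ≤ (Finset.univ.filter fun i : Fin m => j ≤ x i).card
    · have hall : ∀ i ∈ Finset.univ.filter (fun i : Fin m => (i:ℕ) < j), j ≤ x i := by
        intro i hi
        simp only [Finset.mem_filter, Finset.mem_univ, true_and] at hi
        exact mStar_ge_imp x hx hjm hms hi
      calc j ^ 2 = (Finset.univ.filter fun i : Fin m => (i:ℕ) < j).card * j := by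
            rw [card_filter_lt' hjm]; ring
        _ ≤ ∑ i ∈ Finset.univ.filter (fun i : Fin m => (i:ℕ) < j), x i := by
            simpa using Finset.card_nsmul_le_sum (Finset.univ.filter fun i : Fin m => (i:ℕ) < j) x j hall
        _ = pSum x j := (pSum_eq_filter x j).symm
    · push_neg at hms
      have hsub2 : (Finset.univ.filter fun i : Fin m => j ≤ x i)
          ⊆ Finset.univ.filter fun i : Fin m => (i:ℕ) < j := by
        intro i hi
        simp only [Finset.mem_filter, Finset.mem_univ, true_and]
        have := filter_ge_lt x hx j hi
        omega
      calc j ^ 2 ≤ ∑ i ∈ Finset.univ.filter (fun i : Fin m => j ≤ x i), x i := hjT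
        _ ≤ ∑ i ∈ Finset.univ.filter (fun i : Fin m => (i:ℕ) < j), x i :=
            Finset.sum_le_sum_of_subset hsub2
        _ = pSum x j := (pSum_eq_filter x j).symm
  have hνm : sSup N ≤ m := csSup_le' (fun j hj => hj.2.1)
  have hgm : sSup G ≤ m := csSup_le' (fun j hj => hj.2.1)
  have hνg : sSup N ≤ sSup G := csSup_le' (fun j hj => le_csSup gBdd (hsub hj))
  constructor
  · intro heq
    rcases eq_or_lt_of_le hνm with h1 | h1
    · exact Or.inl h1
    · refine Or.inr ⟨h1, ?_⟩
      by_contra hP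
      push_neg at hP
      have hmem : sSup N + 1 ∈ G := ⟨by omega, by omega, hP⟩
      have := le_csSup gBdd hmem
      omega
  · rintro (h1 | ⟨h1, h2⟩)
    · omega
    · refine le_antisymm hνg ?_
      by_contra hlt
      push_neg at hlt
      have hne : G.Nonempty := by
        by_contra he
        rw [Set.not_nonempty_iff_eq_empty] at he
        rw [he, csSup_empty, Nat.bot_eq_zero] at hlt
        omega
      obtain ⟨_, _, hgs⟩ := Nat.sSup_mem hne gBdd
      have := g_down x hx (sSup G) hgs (sSup N + 1) (by omega)
      omega


theorem stmt12 {m : ℕ} (hm : 1 ≤ m) (x : Fin m → ℕ) (hx : Antitone x) :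
    nuBar x = gIndex x ↔
      (nuBar x = m ∨ (nuBar x < m ∧
        pSum x (nuBar x + 1) < (nuBar x + 1) ^ 2)) := by
  exact stmt12_aux hm x hx
end

section
/- For every citation vector x₁ ≥ x₂ ≥ ... ≥ x_m, the g-index is not larger than the unconstrained g*-index (g ≤ g*), and moreover if g < m then g = g*. -/
open Finset

lemma pSum_le_total {m : ℕ} (x : Fin m → ℕ) (k : ℕ) : pSum x k ≤ ∑ i : Fin m, x i := by
  unfold pSum
  exact Finset.sum_le_sum fun i _ => by split <;> simp

lemma pSum_stable {m : ℕ} (x : Fin m → ℕ) {k : ℕ} (hk : m ≤ k) : pSum x k = pSum x m := by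
  unfold pSum
  apply Finset.sum_congr rfl
  intro i _
  simp [i.2, lt_of_lt_of_le i.2 hk]

lemma gStar_bdd {m : ℕ} (x : Fin m → ℕ) :
    BddAbove {k : ℕ | 1 ≤ k ∧ k ^ 2 ≤ pSum x k} := by
  refine ⟨∑ i : Fin m, x i, fun k hk => ?_⟩
  calc k ≤ k ^ 2 := Nat.le_self_pow two_ne_zero k
    _ ≤ pSum x k := hk.2
    _ ≤ _ := pSum_le_total x k

theorem stmt17 {m : ℕ} (hm : 1 ≤ m) (x : Fin m → ℕ) (hx : Antitone x) :
    gIndex x ≤ gStar x ∧ (gIndex x < m → gIndex x = gStar x) := by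
  set G := {k : ℕ | 1 ≤ k ∧ k ≤ m ∧ k ^ 2 ≤ pSum x k} with hG
  set Gs := {k : ℕ | 1 ≤ k ∧ k ^ 2 ≤ pSum x k} with hGs
  have hGbdd : BddAbove G := ⟨m, fun k hk => hk.2.1⟩
  have hsub : G ⊆ Gs := fun k hk => ⟨hk.1, hk.2.2⟩
  have h1 : gIndex x ≤ gStar x := by
    rcases Set.eq_empty_or_nonempty G with h | h
    · simp [gIndex, ← hG, h]
    · exact csSup_le_csSup (gStar_bdd x) h hsub
  refine ⟨h1, fun hlt => ?_⟩
  refine le_antisymm h1 ?_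
  -- show Gs ⊆ G under hlt : gIndex x < m
  have hsub2 : Gs ⊆ G := by
    intro k hk
    by_cases hkm : k ≤ m
    · exact ⟨hk.1, hkm, hk.2⟩
    · exfalso
      push_neg at hkm
      have hmG : m ∈ G := by
        refine ⟨hm, le_refl m, ?_⟩
        calc m ^ 2 ≤ k ^ 2 := Nat.pow_le_pow_left hkm.le 2
          _ ≤ pSum x k := hk.2
          _ = pSum x m := pSum_stable x hkm.le
      have := le_csSup hGbdd hmG
      exact absurd (lt_of_le_of_lt this hlt) (lt_irrefl m)
  rcases Set.eq_empty_or_nonempty Gs with h | h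
  · simp [gStar, ← hGs, h]
  · exact csSup_le_csSup hGbdd h hsub2
end
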